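/- For every dimension d ≥ 1, every SLKKM coloring χ : [0,1]^d → C, and every ε ∈ (0, 1/2], there exists a point p ∈ [0,1]^d such that the open ℓ∞ ball of radius ε centered at p contains points of at least ⌈(1 + (2/3)ε)^d⌉ different colors, i.e. the set {c ∈ C : χ⁻¹(c) ∩ B°_∞(ε, p) ≠ ∅} has cardinality at least ⌈(1 + (2/3)ε)^d⌉. -/

import Mathlib

open MeasureTheory Set
open scoped ENNReal

noncomputable section NKKMproof

private lemma nkkm_measurePreserving_cons (e : ℕ) :
    MeasurePreserving (fun p : ℝ × (Fin e → ℝ) => (Fin.cons p.1 p.2 : Fin (e+1) → ℝ))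
      (volume.prod volume) volume := by
  have h := (volume_preserving_piFinSuccAbove (fun _ : Fin (e+1) => ℝ) 0).symm
  have heq : ⇑(MeasurableEquiv.piFinSuccAbove (fun _ : Fin (e+1) => ℝ) 0).symm
      = fun p : ℝ × (Fin e → ℝ) => (Fin.cons p.1 p.2 : Fin (e+1) → ℝ) := by
    funext p
    simp [MeasurableEquiv.piFinSuccAbove, Fin.consEquiv]
  rwa [heq] at h

private lemma nkkm_dist_cons_lt {e : ℕ} {t s : ℝ} {y z : Fin e → ℝ} {ε : ℝ} (hε : 0 < ε)
    (h1 : |t - s| < ε) (h2 : dist y z < ε) :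
    dist (Fin.cons t y : Fin (e+1) → ℝ) (Fin.cons s z) < ε := by
  rw [dist_pi_lt_iff hε]
  intro i
  induction i using Fin.cases with
  | zero => simpa [Real.dist_eq] using h1
  | succ j => simpa using lt_of_le_of_lt (dist_le_pi_dist y z j) h2

/-- the thickened set intersected with the cube -/
private def nkkmN {d : ℕ} (ε : ℝ) (S : Set (Fin d → ℝ)) : Set (Fin d → ℝ) :=
  Metric.thickening ε S ∩ Set.Icc 0 1

private lemma nkkmN_meas {d : ℕ} (ε : ℝ) (S : Set (Fin d → ℝ)) : MeasurableSet (nkkmN ε S) :=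
  Metric.isOpen_thickening.measurableSet.inter measurableSet_Icc

/-- slice volume function -/
private def nkkmF (e : ℕ) (ε : ℝ) (S : Set (Fin (e+1) → ℝ)) : ℝ → ℝ≥0∞ :=
  fun t => volume {y : Fin e → ℝ | (Fin.cons t y : Fin (e+1) → ℝ) ∈ nkkmN ε S}

/-- slice of a set -/
private def nkkmSl (e : ℕ) (S : Set (Fin (e+1) → ℝ)) (s : ℝ) : Set (Fin e → ℝ) :=
  {y | (Fin.cons s y : Fin (e+1) → ℝ) ∈ S}

private lemma nkkmF_eq (e : ℕ) (ε : ℝ) (S : Set (Fin (e+1) → ℝ)) (t : ℝ) :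
    nkkmF e ε S t = volume (Prod.mk t ⁻¹'
      ((fun p : ℝ × (Fin e → ℝ) => (Fin.cons p.1 p.2 : Fin (e+1) → ℝ)) ⁻¹' nkkmN ε S)) := rfl

private lemma nkkmF_meas (e : ℕ) (ε : ℝ) (S : Set (Fin (e+1) → ℝ)) :
    Measurable (nkkmF e ε S) := by
  have : Measurable fun t => volume (Prod.mk t ⁻¹'
      ((fun p : ℝ × (Fin e → ℝ) => (Fin.cons p.1 p.2 : Fin (e+1) → ℝ)) ⁻¹' nkkmN ε S)) :=
    measurable_measure_prodMk_left
      ((nkkmN_meas ε S).preimage (nkkm_measurePreserving_cons e).measurable)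
  simpa [← nkkmF_eq] using this

private lemma nkkm_claim1 (e : ℕ) (ε : ℝ) (S : Set (Fin (e+1) → ℝ)) :
    volume (nkkmN ε S) = ∫⁻ t, nkkmF e ε S t := by
  have hT := nkkm_measurePreserving_cons e
  have hpre : MeasurableSet ((fun p : ℝ × (Fin e → ℝ) =>
      (Fin.cons p.1 p.2 : Fin (e+1) → ℝ)) ⁻¹' nkkmN ε S) :=
    (nkkmN_meas ε S).preimage hT.measurable
  rw [← hT.measure_preimage (nkkmN_meas ε S).nullMeasurableSet, Measure.prod_apply hpre]
  rfl

private lemma nkkm_cons_mem_cube {e : ℕ} {t : ℝ} {y : Fin e → ℝ}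
    (ht0 : 0 ≤ t) (ht1 : t ≤ 1) (hy : y ∈ Set.Icc (0 : Fin e → ℝ) 1) :
    (Fin.cons t y : Fin (e+1) → ℝ) ∈ Set.Icc (0 : Fin (e+1) → ℝ) 1 := by
  constructor
  · intro i
    induction i using Fin.cases with
    | zero => simpa using ht0
    | succ j => simpa using hy.1 j
  · intro i
    induction i using Fin.cases with
    | zero => simpa using ht1
    | succ j => simpa using hy.2 j

private lemma nkkm_cube_of_cons_mem {e : ℕ} {t : ℝ} {y : Fin e → ℝ}
    (h : (Fin.cons t y : Fin (e+1) → ℝ) ∈ Set.Icc (0 : Fin (e+1) → ℝ) 1) :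
    y ∈ Set.Icc (0 : Fin e → ℝ) 1 := by
  constructor
  · intro i; simpa using h.1 i.succ
  · intro i; simpa using h.2 i.succ

private lemma nkkm_claim2 (e : ℕ) {ε : ℝ} (hε : 0 < ε) (S : Set (Fin (e+1) → ℝ))
    {t s : ℝ} (hts : |t - s| < ε) (ht0 : 0 ≤ t) (ht1 : t ≤ 1) :
    volume (nkkmN ε (nkkmSl e S s)) ≤ nkkmF e ε S t := by
  apply measure_mono
  rintro y ⟨hythick, hyQ⟩
  rw [Metric.mem_thickening_iff] at hythick
  obtain ⟨z, hz, hdz⟩ := hythick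
  constructor
  · rw [Metric.mem_thickening_iff]
    exact ⟨Fin.cons s z, hz, nkkm_dist_cons_lt hε hts hdz⟩
  · exact nkkm_cons_mem_cube ht0 ht1 hyQ

private lemma nkkm_mem_sl {e : ℕ} {S : Set (Fin (e+1) → ℝ)} {s : ℝ} {y : Fin e → ℝ} :
    y ∈ nkkmSl e S s ↔ (Fin.cons s y : Fin (e+1) → ℝ) ∈ S := Iff.rfl

private lemma nkkm_dist_eq_one {d : ℕ} {x y : Fin d → ℝ}
    (hx : x ∈ Set.Icc (0 : Fin d → ℝ) 1) (hy : y ∈ Set.Icc (0 : Fin d → ℝ) 1)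
    {i : Fin d} (h0 : x i = 0) (h1 : y i = 1) : dist x y = 1 := by
  refine le_antisymm ?_ ?_
  · rw [dist_pi_le_iff (by norm_num)]
    intro j
    rw [Real.dist_eq, abs_sub_le_iff]
    constructor
    · have h2 := hx.2 j; have h3 := hy.1 j
      simp only [Pi.one_apply, Pi.zero_apply] at h2 h3
      linarith
    · have h2 := hy.2 j; have h3 := hx.1 j
      simp only [Pi.one_apply, Pi.zero_apply] at h2 h3
      linarith
  · calc (1:ℝ) = dist (x i) (y i) := by rw [Real.dist_eq, h0, h1]; norm_num
    _ ≤ dist x y := dist_le_pi_dist x y i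

set_option maxHeartbeats 1000000 in
private theorem nkkm_key : ∀ (d : ℕ) (ε : ℝ), 0 < ε → ε ≤ 1/2 →
    ∀ S : (Fin d → Bool) → Set (Fin d → ℝ),
    (∀ τ, S τ ⊆ Set.Icc 0 1) →
    (∀ τ x, x ∈ S τ → ∀ i, τ i = false → x i < 1) →
    (∀ τ x, x ∈ S τ → ∀ i, τ i = true → 0 < x i) →
    (∀ x ∈ Set.Icc (0 : Fin d → ℝ) 1, ∃ τ, x ∈ S τ) →
    ENNReal.ofReal ((1 + 2/3 * ε) ^ d) ≤
      ∑ τ : Fin d → Bool, volume (nkkmN ε (S τ)) := by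
  intro d
  induction d with
  | zero =>
      intro ε hε _ S hsub hlow hhigh hcov
      obtain ⟨τ0, hτ0⟩ := hcov 0 (by
        constructor <;> (intro i; exact i.elim0))
      have huniv : nkkmN ε (S τ0) = (univ : Set (Fin 0 → ℝ)) := by
        apply eq_univ_of_forall
        intro x
        have hx0 : x = 0 := funext fun i => i.elim0
        refine ⟨?_, ?_⟩
        · rw [hx0]; exact Metric.self_subset_thickening hε _ hτ0
        · constructor <;> (intro i; exact i.elim0)
      have hvol : volume (nkkmN ε (S τ0)) = 1 := by
        rw [huniv, volume_pi, Measure.pi_univ]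
        simp
      have hsum : ∑ τ : Fin 0 → Bool, volume (nkkmN ε (S τ)) = volume (nkkmN ε (S τ0)) := by
        rw [Fintype.sum_unique]
        exact congrArg (fun τ => volume (nkkmN ε (S τ))) (Subsingleton.elim _ _)
      rw [hsum, hvol]
      simp
  | succ e ih =>
      intro ε hε hε2 S hsub hlow hhigh hcov
      set c : ℝ := 2/3 * ε with hc
      have hc0 : 0 < c := by rw [hc]; linarith
      have hcε : c < ε := by rw [hc]; linarith
      have h12c : 0 ≤ 1 - 2*c := by rw [hc]; linarith
      set P : ℝ≥0∞ := ENNReal.ofReal ((1 + 2/3 * ε) ^ e) with hP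
      -- slice family facts
      have slsub : ∀ (b : Bool) (τ' : Fin e → Bool) (s : ℝ),
          nkkmSl e (S (Fin.cons b τ')) s ⊆ Set.Icc 0 1 := by
        intro b τ' s y hy
        rw [nkkm_mem_sl] at hy
        exact nkkm_cube_of_cons_mem (hsub _ hy)
      have sllow : ∀ (b : Bool) (τ' : Fin e → Bool) (s : ℝ) y,
          y ∈ nkkmSl e (S (Fin.cons b τ')) s → ∀ i, τ' i = false → y i < 1 := by
        intro b τ' s y hy i hi
        rw [nkkm_mem_sl] at hy
        have := hlow _ _ hy i.succ (by simpa using hi)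
        simpa using this
      have slhigh : ∀ (b : Bool) (τ' : Fin e → Bool) (s : ℝ) y,
          y ∈ nkkmSl e (S (Fin.cons b τ')) s → ∀ i, τ' i = true → 0 < y i := by
        intro b τ' s y hy i hi
        rw [nkkm_mem_sl] at hy
        have := hhigh _ _ hy i.succ (by simpa using hi)
        simpa using this
      -- middle induction application
      have ihmid : ∀ s : ℝ, 0 ≤ s → s ≤ 1 → P ≤ ∑ τ' : Fin e → Bool,
          (volume (nkkmN ε (nkkmSl e (S (Fin.cons false τ')) s)) +
           volume (nkkmN ε (nkkmSl e (S (Fin.cons true τ')) s))) := by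
        intro s hs0 hs1
        have h := ih ε hε hε2
          (fun τ' => nkkmSl e (S (Fin.cons false τ')) s ∪ nkkmSl e (S (Fin.cons true τ')) s)
          (by
            intro τ' y hy
            rcases hy with hy | hy
            exacts [slsub false τ' s hy, slsub true τ' s hy])
          (by
            intro τ' y hy i hi
            rcases hy with hy | hy
            exacts [sllow false τ' s y hy i hi, sllow true τ' s y hy i hi])
          (by
            intro τ' y hy i hi
            rcases hy with hy | hy
            exacts [slhigh false τ' s y hy i hi, slhigh true τ' s y hy i hi])
          (by
            intro y hy
            obtain ⟨τ, hτ⟩ := hcov (Fin.cons s y) (nkkm_cons_mem_cube hs0 hs1 hy)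
            refine ⟨Fin.tail τ, ?_⟩
            cases hb : τ 0 with
            | false =>
                left
                rw [nkkm_mem_sl, ← hb, Fin.cons_self_tail]
                exact hτ
            | true =>
                right
                rw [nkkm_mem_sl, ← hb, Fin.cons_self_tail]
                exact hτ)
        refine le_trans h (Finset.sum_le_sum fun τ' _ => ?_)
        have hun : nkkmN ε (nkkmSl e (S (Fin.cons false τ')) s ∪ nkkmSl e (S (Fin.cons true τ')) s)
            = nkkmN ε (nkkmSl e (S (Fin.cons false τ')) s) ∪
              nkkmN ε (nkkmSl e (S (Fin.cons true τ')) s) := by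
          unfold nkkmN
          rw [Metric.thickening_union, union_inter_distrib_right]
        rw [hun]
        exact measure_union_le _ _
      -- bottom induction application
      have ihbot : P ≤ ∑ τ' : Fin e → Bool,
          volume (nkkmN ε (nkkmSl e (S (Fin.cons false τ')) 0)) := by
        apply ih ε hε hε2 (fun τ' => nkkmSl e (S (Fin.cons false τ')) 0)
        · intro τ'; exact slsub false τ' 0
        · intro τ' y hy i hi; exact sllow false τ' 0 y hy i hi
        · intro τ' y hy i hi; exact slhigh false τ' 0 y hy i hi
        · intro y hy
          obtain ⟨τ, hτ⟩ := hcov (Fin.cons 0 y) (nkkm_cons_mem_cube le_rfl zero_le_one hy)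
          have hb : τ 0 = false := by
            by_contra hbb
            rw [Bool.not_eq_false] at hbb
            have h0 := hhigh τ _ hτ 0 hbb
            rw [Fin.cons_zero] at h0
            exact lt_irrefl _ h0
          refine ⟨Fin.tail τ, ?_⟩
          rw [nkkm_mem_sl, ← hb, Fin.cons_self_tail]
          exact hτ
      -- top induction application
      have ihtop : P ≤ ∑ τ' : Fin e → Bool,
          volume (nkkmN ε (nkkmSl e (S (Fin.cons true τ')) 1)) := by
        apply ih ε hε hε2 (fun τ' => nkkmSl e (S (Fin.cons true τ')) 1)
        · intro τ'; exact slsub true τ' 1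
        · intro τ' y hy i hi; exact sllow true τ' 1 y hy i hi
        · intro τ' y hy i hi; exact slhigh true τ' 1 y hy i hi
        · intro y hy
          obtain ⟨τ, hτ⟩ := hcov (Fin.cons 1 y) (nkkm_cons_mem_cube zero_le_one le_rfl hy)
          have hb : τ 0 = true := by
            by_contra hbb
            rw [Bool.not_eq_true] at hbb
            have h0 := hlow τ _ hτ 0 hbb
            rw [Fin.cons_zero] at h0
            exact lt_irrefl _ h0
          refine ⟨Fin.tail τ, ?_⟩
          rw [nkkm_mem_sl, ← hb, Fin.cons_self_tail]
          exact hτ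
      -- pointwise bounds
      have bot_bound : ∀ t ∈ Ico (0:ℝ) ε, P ≤ ∑ τ' : Fin e → Bool,
          nkkmF e ε (S (Fin.cons false τ')) t := by
        intro t ht
        refine le_trans ihbot (Finset.sum_le_sum fun τ' _ => ?_)
        refine nkkm_claim2 e hε _ ?_ ht.1 (le_trans ht.2.le (by linarith))
        rw [sub_zero, abs_of_nonneg ht.1]
        exact ht.2
      have top_bound : ∀ t ∈ Ioc (1-ε:ℝ) 1, P ≤ ∑ τ' : Fin e → Bool,
          nkkmF e ε (S (Fin.cons true τ')) t := by
        intro t ht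
        refine le_trans ihtop (Finset.sum_le_sum fun τ' _ => ?_)
        refine nkkm_claim2 e hε _ ?_ (by linarith [ht.1]) ht.2
        rw [abs_sub_comm, abs_of_nonneg (by linarith [ht.2])]
        linarith [ht.1]
      have mid_bound : ∀ s ∈ Icc (c:ℝ) (1-c), P ≤ ∑ τ' : Fin e → Bool,
          (nkkmF e ε (S (Fin.cons false τ')) (s + c) +
           nkkmF e ε (S (Fin.cons true τ')) (s - c)) := by
        intro s hs
        have hs0 : 0 ≤ s := le_trans hc0.le hs.1
        have hs1 : s ≤ 1 := le_trans hs.2 (by linarith)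
        refine le_trans (ihmid s hs0 hs1) (Finset.sum_le_sum fun τ' _ => ?_)
        refine add_le_add ?_ ?_
        · refine nkkm_claim2 e hε _ ?_ (by linarith [hs.1]) (by linarith [hs.2])
          rw [add_sub_cancel_left, abs_of_nonneg hc0.le]
          exact hcε
        · refine nkkm_claim2 e hε _ ?_ (by linarith [hs.1]) (by linarith [hs.2, hc0.le])
          rw [show s - c - s = -c by ring, abs_neg, abs_of_nonneg hc0.le]
          exact hcε
      -- integral pieces
      have sumbot : P * ENNReal.ofReal ε ≤
          ∑ τ' : Fin e → Bool, ∫⁻ t in Ico (0:ℝ) ε, nkkmF e ε (S (Fin.cons false τ')) t := by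
        rw [← lintegral_finset_sum Finset.univ
          (fun τ' _ => nkkmF_meas e ε (S (Fin.cons false τ')))]
        have hconst : P * ENNReal.ofReal ε = ∫⁻ _ in Ico (0:ℝ) ε, P ∂volume := by
          rw [setLIntegral_const, Real.volume_Ico, sub_zero]
        rw [hconst]
        exact setLIntegral_mono' measurableSet_Ico bot_bound
      have sumtop : P * ENNReal.ofReal ε ≤
          ∑ τ' : Fin e → Bool, ∫⁻ t in Ioc (1-ε:ℝ) 1, nkkmF e ε (S (Fin.cons true τ')) t := by
        rw [← lintegral_finset_sum Finset.univ
          (fun τ' _ => nkkmF_meas e ε (S (Fin.cons true τ')))]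
        have hconst : P * ENNReal.ofReal ε = ∫⁻ _ in Ioc (1-ε:ℝ) 1, P ∂volume := by
          rw [setLIntegral_const, Real.volume_Ioc, show (1:ℝ) - (1-ε) = ε by ring]
        rw [hconst]
        exact setLIntegral_mono' measurableSet_Ioc top_bound
      have hmeasf : ∀ τ' : Fin e → Bool,
          Measurable (fun t : ℝ => nkkmF e ε (S (Fin.cons false τ')) (t + c)) :=
        fun τ' => (nkkmF_meas e ε _).comp (measurable_id.add_const c)
      have hmeast : ∀ τ' : Fin e → Bool,
          Measurable (fun t : ℝ => nkkmF e ε (S (Fin.cons true τ')) (t - c)) :=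
        fun τ' => (nkkmF_meas e ε _).comp (measurable_id.sub_const c)
      have summid : P * ENNReal.ofReal (1-2*c) ≤
          ∑ τ' : Fin e → Bool,
            ((∫⁻ t in Icc (c:ℝ) (1-c), nkkmF e ε (S (Fin.cons false τ')) (t + c)) +
             (∫⁻ t in Icc (c:ℝ) (1-c), nkkmF e ε (S (Fin.cons true τ')) (t - c))) := by
        have hsum : ∀ τ' : Fin e → Bool,
            (∫⁻ t in Icc (c:ℝ) (1-c), nkkmF e ε (S (Fin.cons false τ')) (t + c)) +
            (∫⁻ t in Icc (c:ℝ) (1-c), nkkmF e ε (S (Fin.cons true τ')) (t - c))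
            = ∫⁻ t in Icc (c:ℝ) (1-c),
                (nkkmF e ε (S (Fin.cons false τ')) (t + c) +
                 nkkmF e ε (S (Fin.cons true τ')) (t - c)) :=
          fun τ' => (lintegral_add_left (hmeasf τ') _).symm
        rw [Finset.sum_congr rfl (fun τ' _ => hsum τ')]
        rw [← lintegral_finset_sum Finset.univ (fun τ' _ => (show Measurable fun t => nkkmF e ε (S (Fin.cons false τ')) (t + c) + nkkmF e ε (S (Fin.cons true τ')) (t - c) from (hmeasf τ').add (hmeast τ')))]
        have hconst : P * ENNReal.ofReal (1-2*c) = ∫⁻ _ in Icc (c:ℝ) (1-c), P ∂volume := by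
          rw [setLIntegral_const, Real.volume_Icc, show (1:ℝ) - c - c = 1 - 2*c by ring]
        rw [hconst]
        exact setLIntegral_mono' measurableSet_Icc mid_bound
      -- translations
      have transf : ∀ τ' : Fin e → Bool,
          (∫⁻ t in Icc (c:ℝ) (1-c), nkkmF e ε (S (Fin.cons false τ')) (t + c))
          = ∫⁻ t in Icc (2*c) 1, nkkmF e ε (S (Fin.cons false τ')) t := by
        intro τ'
        have hmp : MeasurePreserving (fun x : ℝ => x + c) volume volume :=
          measurePreserving_add_right volume c
        have h := hmp.setLIntegral_comp_preimage_emb (measurableEmbedding_addRight c)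
          (nkkmF e ε (S (Fin.cons false τ'))) (Icc (2*c) 1)
        rw [preimage_add_const_Icc, show 2*c - c = c by ring] at h
        exact h
      have transt : ∀ τ' : Fin e → Bool,
          (∫⁻ t in Icc (c:ℝ) (1-c), nkkmF e ε (S (Fin.cons true τ')) (t - c))
          = ∫⁻ t in Icc (0:ℝ) (1-2*c), nkkmF e ε (S (Fin.cons true τ')) t := by
        intro τ'
        have hmp : MeasurePreserving (fun x : ℝ => x + (-c)) volume volume :=
          measurePreserving_add_right volume (-c)
        have h := hmp.setLIntegral_comp_preimage_emb (measurableEmbedding_addRight (-c))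
          (nkkmF e ε (S (Fin.cons true τ'))) (Icc (0:ℝ) (1-2*c))
        rw [preimage_add_const_Icc, show (0:ℝ) - (-c) = c by ring,
          show (1:ℝ) - 2*c - (-c) = 1 - c by ring] at h
        rw [← h]
        apply lintegral_congr
        intro t
        rw [sub_eq_add_neg]
      -- splits
      have splitf : ∀ τ' : Fin e → Bool,
          (∫⁻ t in Ico (0:ℝ) ε, nkkmF e ε (S (Fin.cons false τ')) t) +
          (∫⁻ t in Icc (2*c) 1, nkkmF e ε (S (Fin.cons false τ')) t)
          ≤ ∫⁻ t, nkkmF e ε (S (Fin.cons false τ')) t := by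
        intro τ'
        rw [← lintegral_union measurableSet_Icc (by
          rw [Set.disjoint_left]
          rintro t ⟨ht0, htε⟩ ⟨ht2c, ht1⟩
          rw [hc] at ht2c
          linarith)]
        exact setLIntegral_le_lintegral _ _
      have splitt : ∀ τ' : Fin e → Bool,
          (∫⁻ t in Ioc (1-ε:ℝ) 1, nkkmF e ε (S (Fin.cons true τ')) t) +
          (∫⁻ t in Icc (0:ℝ) (1-2*c), nkkmF e ε (S (Fin.cons true τ')) t)
          ≤ ∫⁻ t, nkkmF e ε (S (Fin.cons true τ')) t := by
        intro τ'
        rw [← lintegral_union measurableSet_Icc (by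
          rw [Set.disjoint_left]
          rintro t ⟨ht0, htε⟩ ⟨ht2c, ht1⟩
          rw [hc] at ht1
          linarith)]
        exact setLIntegral_le_lintegral _ _
      -- reindexing
      have reindex : ∀ g : (Fin (e+1) → Bool) → ℝ≥0∞,
          ∑ τ, g τ = (∑ τ' : Fin e → Bool, g (Fin.cons false τ')) +
            (∑ τ' : Fin e → Bool, g (Fin.cons true τ')) := by
        intro g
        rw [← (Fin.consEquiv (fun _ : Fin (e+1) => Bool)).sum_comp g, Fintype.sum_prod_type,
          Fintype.sum_bool]
        exact add_comm _ _
      have hgroupf : (∑ τ' : Fin e → Bool, ∫⁻ t in Ico (0:ℝ) ε,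
              nkkmF e ε (S (Fin.cons false τ')) t) +
            (∑ τ' : Fin e → Bool, ∫⁻ t in Icc (2*c) 1, nkkmF e ε (S (Fin.cons false τ')) t)
          ≤ ∑ τ' : Fin e → Bool, ∫⁻ t, nkkmF e ε (S (Fin.cons false τ')) t := by
        rw [← Finset.sum_add_distrib]
        exact Finset.sum_le_sum fun τ' _ => splitf τ'
      have hgroupt : (∑ τ' : Fin e → Bool, ∫⁻ t in Ioc (1-ε:ℝ) 1,
              nkkmF e ε (S (Fin.cons true τ')) t) +
            (∑ τ' : Fin e → Bool, ∫⁻ t in Icc (0:ℝ) (1-2*c),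
              nkkmF e ε (S (Fin.cons true τ')) t)
          ≤ ∑ τ' : Fin e → Bool, ∫⁻ t, nkkmF e ε (S (Fin.cons true τ')) t := by
        rw [← Finset.sum_add_distrib]
        exact Finset.sum_le_sum fun τ' _ => splitt τ'
      have hmid_eq : (∑ τ' : Fin e → Bool,
            ((∫⁻ t in Icc (c:ℝ) (1-c), nkkmF e ε (S (Fin.cons false τ')) (t + c)) +
             (∫⁻ t in Icc (c:ℝ) (1-c), nkkmF e ε (S (Fin.cons true τ')) (t - c))))
          = (∑ τ' : Fin e → Bool, ∫⁻ t in Icc (2*c) 1, nkkmF e ε (S (Fin.cons false τ')) t) +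
            (∑ τ' : Fin e → Bool, ∫⁻ t in Icc (0:ℝ) (1-2*c),
              nkkmF e ε (S (Fin.cons true τ')) t) := by
        rw [← Finset.sum_add_distrib]
        exact Finset.sum_congr rfl fun τ' _ => by rw [transf τ', transt τ']
      calc ENNReal.ofReal ((1 + 2/3 * ε) ^ (e+1))
          = P * ENNReal.ofReal (1 + 2/3 * ε) := by
            rw [pow_succ, ENNReal.ofReal_mul (by positivity)]
        _ = P * ENNReal.ofReal ε + P * ENNReal.ofReal ε + P * ENNReal.ofReal (1 - 2*c) := by
            rw [← mul_add, ← mul_add, ← ENNReal.ofReal_add hε.le hε.le,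
              ← ENNReal.ofReal_add (by linarith) h12c]
            congr 2
            rw [hc]; ring
        _ ≤ (∑ τ' : Fin e → Bool, ∫⁻ t in Ico (0:ℝ) ε, nkkmF e ε (S (Fin.cons false τ')) t)
            + (∑ τ' : Fin e → Bool, ∫⁻ t in Ioc (1-ε:ℝ) 1, nkkmF e ε (S (Fin.cons true τ')) t)
            + (∑ τ' : Fin e → Bool,
                ((∫⁻ t in Icc (c:ℝ) (1-c), nkkmF e ε (S (Fin.cons false τ')) (t + c)) +
                 (∫⁻ t in Icc (c:ℝ) (1-c), nkkmF e ε (S (Fin.cons true τ')) (t - c)))) :=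
            add_le_add (add_le_add sumbot sumtop) summid
        _ = ((∑ τ' : Fin e → Bool, ∫⁻ t in Ico (0:ℝ) ε,
                nkkmF e ε (S (Fin.cons false τ')) t) +
             (∑ τ' : Fin e → Bool, ∫⁻ t in Icc (2*c) 1,
                nkkmF e ε (S (Fin.cons false τ')) t)) +
            ((∑ τ' : Fin e → Bool, ∫⁻ t in Ioc (1-ε:ℝ) 1,
                nkkmF e ε (S (Fin.cons true τ')) t) +
             (∑ τ' : Fin e → Bool, ∫⁻ t in Icc (0:ℝ) (1-2*c),
                nkkmF e ε (S (Fin.cons true τ')) t)) := by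
            rw [hmid_eq]; ring
        _ ≤ (∑ τ' : Fin e → Bool, ∫⁻ t, nkkmF e ε (S (Fin.cons false τ')) t)
            + (∑ τ' : Fin e → Bool, ∫⁻ t, nkkmF e ε (S (Fin.cons true τ')) t) :=
            add_le_add hgroupf hgroupt
        _ = ∑ τ : Fin (e+1) → Bool, ∫⁻ t, nkkmF e ε (S τ) t :=
            (reindex (fun τ => ∫⁻ t, nkkmF e ε (S τ) t)).symm
        _ = ∑ τ : Fin (e+1) → Bool, volume (nkkmN ε (S τ)) :=
            Finset.sum_congr rfl fun τ _ => (nkkm_claim1 e ε (S τ)).symm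



set_option maxHeartbeats 1000000 in
/-- **Neighborhood KKM-Lebesgue Theorem, `ε ∈ (0, 1/2]` version.** Given an SLKKM coloring
of `[0,1]^d`, for any `ε ∈ (0, 1/2]` there is a point `p` of the cube whose open `ℓ∞`
`ε`-ball contains points of at least `⌈(1 + (2/3)ε)^d⌉` different colors. -/
theorem neighborhood_kkm_lebesgue_half
    (d : ℕ) (hd : 1 ≤ d) (C : Type*) (χ : (Fin d → ℝ) → C)
    (hχ : ∀ x ∈ Set.Icc (0 : Fin d → ℝ) 1, ∀ y ∈ Set.Icc (0 : Fin d → ℝ) 1,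
      dist x y = 1 → χ x ≠ χ y)
    (ε : ℝ) (hε : ε ∈ Set.Ioc (0 : ℝ) (1/2)) :
    ∃ p ∈ Set.Icc (0 : Fin d → ℝ) 1,
      (⌈(1 + (2/3) * ε) ^ d⌉₊ : ℕ∞) ≤
        {c : C | (Set.Icc (0 : Fin d → ℝ) 1 ∩ χ ⁻¹' {c} ∩ Metric.ball p ε).Nonempty}.encard := by
  classical
  obtain ⟨hε0, hε2⟩ := hε
  set V : ℝ := (1 + 2/3 * ε) ^ d with hV
  set sig : C → (Fin d → Bool) := fun ch i =>
    decide (∃ x, x ∈ Set.Icc (0 : Fin d → ℝ) 1 ∧ χ x = ch ∧ x i = 1) with hsig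
  set S : (Fin d → Bool) → Set (Fin d → ℝ) :=
    fun τ => {x | x ∈ Set.Icc (0 : Fin d → ℝ) 1 ∧ sig (χ x) = τ} with hS
  have hsub : ∀ τ, S τ ⊆ Set.Icc 0 1 := fun τ x hx => hx.1
  have hhigh : ∀ τ x, x ∈ S τ → ∀ i, τ i = true → 0 < x i := by
    intro τ x hx i hi
    obtain ⟨hxQ, hxs⟩ := hx
    rw [← hxs, hsig] at hi
    have hex : ∃ y, y ∈ Set.Icc (0 : Fin d → ℝ) 1 ∧ χ y = χ x ∧ y i = 1 :=
      of_decide_eq_true hi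
    obtain ⟨y, hyQ, hyc, hy1⟩ := hex
    by_contra hcon
    push_neg at hcon
    have hx0 : x i = 0 := le_antisymm hcon (hxQ.1 i)
    exact (hχ x hxQ y hyQ (nkkm_dist_eq_one hxQ hyQ hx0 hy1)) hyc.symm
  have hlow : ∀ τ x, x ∈ S τ → ∀ i, τ i = false → x i < 1 := by
    intro τ x hx i hi
    obtain ⟨hxQ, hxs⟩ := hx
    rw [← hxs, hsig] at hi
    by_contra hcon
    push_neg at hcon
    have hx1 : x i = 1 := le_antisymm (hxQ.2 i) hcon
    have hdec : decide (∃ y, y ∈ Set.Icc (0:Fin d → ℝ) 1 ∧ χ y = χ x ∧ y i = 1) = true :=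
      decide_eq_true ⟨x, hxQ, rfl, hx1⟩
    have hi' : decide (∃ y, y ∈ Set.Icc (0:Fin d → ℝ) 1 ∧ χ y = χ x ∧ y i = 1) = false := hi
    rw [hdec] at hi'
    simp at hi'
  have hcov : ∀ x ∈ Set.Icc (0 : Fin d → ℝ) 1, ∃ τ, x ∈ S τ :=
    fun x hx => ⟨sig (χ x), hx, rfl⟩
  have hkey := nkkm_key d ε hε0 hε2 S hsub hlow hhigh hcov
  by_contra hcontra
  push_neg at hcontra
  set N : ℕ := ⌈V⌉₊ with hN
  have hV1 : (1:ℝ) ≤ V := one_le_pow₀ (by linarith)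
  have hN1 : 1 ≤ N := Nat.one_le_ceil_iff.mpr (by linarith)
  have hcard : ∀ p ∈ Set.Icc (0 : Fin d → ℝ) 1,
      ((Finset.univ.filter (fun τ => p ∈ Metric.thickening ε (S τ))).card) ≤ N - 1 := by
    intro p hp
    set Ts := Finset.univ.filter (fun τ => p ∈ Metric.thickening ε (S τ)) with hTs
    set w : (Fin d → Bool) → (Fin d → ℝ) := fun τ =>
      if h : p ∈ Metric.thickening ε (S τ) then
        (Metric.mem_thickening_iff.mp h).choose else 0 with hw
    have hwS : ∀ τ, p ∈ Metric.thickening ε (S τ) → w τ ∈ S τ ∧ dist p (w τ) < ε := by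
      intro τ h
      have hspec := (Metric.mem_thickening_iff.mp h).choose_spec
      rw [hw]
      simp only [dif_pos h]
      exact hspec
    have hTscard : (Ts.card : ℕ∞) < (N : ℕ∞) := by
      have hinj : Set.InjOn (fun τ => χ (w τ)) ↑Ts := by
        intro τ1 h1 τ2 h2 heq
        rw [Finset.mem_coe, hTs, Finset.mem_filter] at h1 h2
        have hw1 := hwS τ1 h1.2
        have hw2 := hwS τ2 h2.2
        have e1 : sig (χ (w τ1)) = τ1 := (hw1.1).2
        have e2 : sig (χ (w τ2)) = τ2 := (hw2.1).2
        rw [← e1, ← e2]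
        simp only [heq]
      have himg : (fun τ => χ (w τ)) '' ↑Ts ⊆
          {c : C | (Set.Icc (0:Fin d→ℝ) 1 ∩ χ ⁻¹' {c} ∩ Metric.ball p ε).Nonempty} := by
        rintro c ⟨τ, hτ, rfl⟩
        rw [Finset.mem_coe, hTs, Finset.mem_filter] at hτ
        have hwτ := hwS τ hτ.2
        simp only [Set.mem_setOf_eq]
        exact ⟨w τ, ⟨⟨hwτ.1.1, rfl⟩, by rw [Metric.mem_ball, dist_comm]; exact hwτ.2⟩⟩
      calc (Ts.card : ℕ∞) = (↑Ts : Set (Fin d → Bool)).encard :=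
            (Set.encard_coe_eq_coe_finsetCard Ts).symm
        _ = ((fun τ => χ (w τ)) '' ↑Ts).encard := (hinj.encard_image).symm
        _ ≤ _ := Set.encard_le_encard himg
        _ < (N : ℕ∞) := hcontra p hp
    have : Ts.card < N := by exact_mod_cast hTscard
    omega
  have hpoint : ∀ p, (∑ τ : Fin d → Bool, (nkkmN ε (S τ)).indicator (fun _ => (1:ℝ≥0∞)) p)
      ≤ Set.indicator (Set.Icc (0:Fin d → ℝ) 1) (fun _ => ((N - 1 : ℕ) : ℝ≥0∞)) p := by
    intro p
    by_cases hp : p ∈ Set.Icc (0 : Fin d → ℝ) 1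
    · rw [Set.indicator_of_mem hp]
      have heq : ∑ τ : Fin d → Bool, (nkkmN ε (S τ)).indicator (fun _ => (1:ℝ≥0∞)) p
          = ((Finset.univ.filter (fun τ => p ∈ Metric.thickening ε (S τ))).card : ℝ≥0∞) := by
        rw [← Finset.sum_boole]
        refine Finset.sum_congr rfl fun τ _ => ?_
        by_cases h : p ∈ Metric.thickening ε (S τ)
        · have hmem : p ∈ nkkmN ε (S τ) := Set.mem_inter h hp
          rw [if_pos h, Set.indicator_of_mem hmem]
        · rw [if_neg h]
          exact Set.indicator_of_notMem (fun hmem => h (Set.mem_of_mem_inter_left hmem)) _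
      rw [heq]
      exact_mod_cast Nat.cast_le.mpr (hcard p hp)
    · rw [Set.indicator_of_notMem hp]
      have hzero : ∀ τ : Fin d → Bool, (nkkmN ε (S τ)).indicator (fun _ => (1:ℝ≥0∞)) p = 0 :=
        fun τ => Set.indicator_of_notMem (fun hmem => hp hmem.2) _
      rw [Finset.sum_congr rfl fun τ _ => hzero τ]
      simp
  have hint : ∑ τ : Fin d → Bool, volume (nkkmN ε (S τ)) ≤ ((N - 1 : ℕ) : ℝ≥0∞) := by
    calc ∑ τ : Fin d → Bool, volume (nkkmN ε (S τ))
        = ∑ τ : Fin d → Bool, ∫⁻ p, (nkkmN ε (S τ)).indicator (fun _ => (1:ℝ≥0∞)) p := by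
          refine Finset.sum_congr rfl fun τ _ => ?_
          rw [lintegral_indicator (nkkmN_meas ε (S τ))]
          simp
      _ = ∫⁻ p, ∑ τ : Fin d → Bool, (nkkmN ε (S τ)).indicator (fun _ => (1:ℝ≥0∞)) p :=
          (lintegral_finset_sum _ (fun τ _ =>
            (measurable_const.indicator (nkkmN_meas ε (S τ))))).symm
      _ ≤ ∫⁻ p, Set.indicator (Set.Icc (0:Fin d → ℝ) 1)
            (fun _ => ((N-1:ℕ):ℝ≥0∞)) p := lintegral_mono hpoint
      _ = ((N-1:ℕ):ℝ≥0∞) * volume (Set.Icc (0:Fin d → ℝ) 1) := by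
          rw [lintegral_indicator measurableSet_Icc, setLIntegral_const]
      _ = ((N-1:ℕ):ℝ≥0∞) := by
          rw [Real.volume_Icc_pi]
          simp
  have hfin : ENNReal.ofReal V ≤ ((N-1:ℕ):ℝ≥0∞) := le_trans hkey hint
  have hVle : V ≤ ((N-1:ℕ):ℝ) := by
    rw [← ENNReal.ofReal_natCast (N-1)] at hfin
    exact (ENNReal.ofReal_le_ofReal_iff (by positivity)).mp hfin
  have hceil : (N:ℝ) < V + 1 := Nat.ceil_lt_add_one (by linarith)
  have hcast : ((N-1:ℕ):ℝ) = (N:ℝ) - 1 := by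
    rw [Nat.cast_sub hN1]; simp
  rw [hcast] at hVle
  linarith

end NKKMproof
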